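/- arXiv:math/0310094 — 3 statements merged into one kernel-verified Lean document; each statement's English description precedes it below -/
import Mathlib

section
/- The von Neumann bornology of a metrizable topological vector space is bornologically metrizable: if V is a metrizable locally convex topological vector space and (S_n) is a sequence of von Neumann bounded subsets (subsets absorbed by every neighborhood of zero), then there exists a sequence of positive scalars (ε_n) such that ⋃_n ε_n S_n is von Neumann bounded. -/
open Pointwise

lemma smul_bounded_aux {V : Type*} [AddCommGroup V] [Module ℝ V] [TopologicalSpace V]
    [IsTopologicalAddGroup V] [ContinuousSMul ℝ V] (c : ℝ) {s : Set V}
    (hs : Bornology.IsVonNBounded ℝ s) : Bornology.IsVonNBounded ℝ (c • s) := by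
  have := hs.image (σ := RingHom.id ℝ) (c • ContinuousLinearMap.id ℝ V)
  simpa [Set.image_smul] using this

/-- The von Neumann bornology of a metrizable locally convex
topological vector space is bornologically metrizable. -/
theorem stmt_1 {V : Type*} [AddCommGroup V] [Module ℝ V] [TopologicalSpace V]
    [IsTopologicalAddGroup V] [ContinuousSMul ℝ V] [LocallyConvexSpace ℝ V]
    [TopologicalSpace.MetrizableSpace V]
    (S : ℕ → Set V) (hS : ∀ n, Bornology.IsVonNBounded ℝ (S n)) :
    ∃ ε : ℕ → ℝ, (∀ n, 0 < ε n) ∧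
      Bornology.IsVonNBounded ℝ (⋃ n, ε n • S n) := by
  letI := TopologicalSpace.metrizableSpaceMetric V
  obtain ⟨B, hB, hBanti⟩ := (nhds_basis_balanced ℝ V).exists_antitone_subbasis
  -- choose scalars
  have key : ∀ n, ∃ δ : ℝ, 0 < δ ∧ δ • S n ⊆ B n := by
    intro n
    obtain ⟨r, hr⟩ := absorbs_iff_norm.mp (hS n (hB n).1)
    set a : ℝ := max r 1 with ha
    have ha1 : (1:ℝ) ≤ a := le_max_right _ _
    have ha0 : 0 < a := lt_of_lt_of_le one_pos ha1
    have hsub : S n ⊆ a • B n := hr a (by rw [Real.norm_eq_abs, abs_of_pos ha0]; exact le_max_left _ _)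
    refine ⟨a⁻¹, inv_pos.mpr ha0, ?_⟩
    intro x hx
    obtain ⟨y, hy, rfl⟩ := hx
    obtain ⟨z, hz, rfl⟩ := hsub hy
    show a⁻¹ • a • z ∈ B n
    rw [smul_smul, inv_mul_cancel₀ ha0.ne', one_smul]
    exact hz
  choose ε hε hεB using key
  refine ⟨ε, hε, ?_⟩
  intro W hW
  obtain ⟨k, -, hkW⟩ := hBanti.toHasBasis.mem_iff.mp hW
  have hsplit : (⋃ n, ε n • S n) ⊆ (⋃ n ∈ Finset.range (k+1), ε n • S n) ∪ B k := by
    intro x hx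
    obtain ⟨n, hn⟩ := Set.mem_iUnion.mp hx
    rcases le_or_gt n k with h | h
    · exact Or.inl (Set.mem_biUnion (Finset.mem_range.mpr (Nat.lt_succ_of_le h)) hn)
    · exact Or.inr ((hBanti.antitone h.le).trans' (hεB n) hn)
  refine Absorbs.mono_right ?_ hsplit
  refine Absorbs.union ?_ ?_
  · have hbdd : Bornology.IsVonNBounded ℝ (⋃ n ∈ Finset.range (k+1), ε n • S n) := by
      have : (↑(Finset.range (k+1)) : Set ℕ).Finite := (Finset.range (k+1)).finite_toSet
      rw [show (⋃ n ∈ Finset.range (k+1), ε n • S n) = ⋃ n ∈ (↑(Finset.range (k+1)) : Set ℕ), ε n • S n from rfl,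
        Bornology.isVonNBounded_biUnion this]
      exact fun n _ => smul_bounded_aux (ε n) (hS n)
    exact hbdd hW
  · exact ((hB k).2.absorbs_self).mono_left hkW
end

section
/- Every locally compact topological group contains an open subgroup U such that U/U₀ is compact, where U₀ is the identity component of U; that is, every locally compact group contains an open almost connected subgroup. -/
open Set Filter Topology
open scoped Pointwise

section vanDantzig
variable {Q : Type*} [Group Q] [TopologicalSpace Q] [IsTopologicalGroup Q]

lemma aux_exist_mul_closure_nhd {W : Set Q} (Wcomp : IsCompact W) (Wopen : IsOpen W) :
    ∃ T ∈ 𝓝 (1 : Q), W * T ⊆ W := by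
  apply Wcomp.induction_on (p := fun S ↦ ∃ T ∈ 𝓝 (1 : Q), S * T ⊆ W)
    ⟨Set.univ, by simp only [univ_mem, empty_mul, empty_subset, and_self]⟩
    (fun _ _ huv ⟨T, hT, mem⟩ ↦ ⟨T, hT, (mul_subset_mul_right huv).trans mem⟩)
    fun U V ⟨T₁, hT₁, mem1⟩ ⟨T₂, hT₂, mem2⟩ ↦ ⟨T₁ ∩ T₂, inter_mem hT₁ hT₂, by
      rw [union_mul]
      exact union_subset (mul_subset_mul_left inter_subset_left |>.trans mem1)
        (mul_subset_mul_left inter_subset_right |>.trans mem2)⟩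
  intro x memW
  have : (x, 1) ∈ (fun p : Q × Q ↦ p.1 * p.2) ⁻¹' W := by simp [memW]
  rcases isOpen_prod_iff.mp (continuous_mul.isOpen_preimage W Wopen) x 1 this with
    ⟨U, V, Uopen, Vopen, xmemU, onememV, prodsub⟩
  have h6 : U * V ⊆ W := mul_subset_iff.mpr (fun _ hx _ hy ↦ prodsub (mk_mem_prod hx hy))
  exact ⟨U ∩ W, ⟨U, Uopen.mem_nhds xmemU, W, fun _ a ↦ a, rfl⟩,
    V, IsOpen.mem_nhds Vopen onememV, fun _ a ↦ h6 ((mul_subset_mul_right inter_subset_left) a)⟩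

lemma aux_exist_openSubgroup {W : Set Q} (Wcomp : IsCompact W) (Wopen : IsOpen W)
    (einW : 1 ∈ W) : ∃ H : Subgroup Q, IsOpen (H : Set Q) ∧ (H : Set Q) ⊆ W := by
  rcases aux_exist_mul_closure_nhd Wcomp Wopen with ⟨S, Smemnhds, mulclose⟩
  rcases mem_nhds_iff.mp Smemnhds with ⟨U, UsubS, Uopen, onememU⟩
  set V : Set Q := U ∩ U⁻¹ with hVdef
  have hVnhd : V ∈ 𝓝 (1 : Q) := by
    refine inter_mem (Uopen.mem_nhds onememU) ?_
    exact (Uopen.inv).mem_nhds (by simpa using onememU)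
  have hVinv : V⁻¹ = V := by simp [hVdef, inter_comm]
  have hVopen : IsOpen V := Uopen.inter Uopen.inv
  have hVmul : W * V ⊆ W := fun a ha ↦
    mulclose (mul_subset_mul_left UsubS (mul_subset_mul_left inter_subset_left ha))
  let S' : Subgroup Q := {
    carrier := ⋃ n, V ^ (n + 1)
    mul_mem' := fun ha hb ↦ by
      rcases mem_iUnion.mp ha with ⟨k, hk⟩
      rcases mem_iUnion.mp hb with ⟨l, hl⟩
      apply mem_iUnion.mpr
      use k + 1 + l
      rw [add_assoc, pow_add]
      exact Set.mul_mem_mul hk hl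
    one_mem' := by
      apply mem_iUnion.mpr
      use 0
      simp [mem_of_mem_nhds hVnhd]
    inv_mem' := fun ha ↦ by
      rcases mem_iUnion.mp ha with ⟨k, hk⟩
      apply mem_iUnion.mpr
      use k
      rw [← hVinv]
      simpa only [inv_pow, Set.mem_inv, inv_inv] using hk }
  have hopen : IsOpen (⋃ n, V ^ (n + 1)) := by
    refine isOpen_iUnion (fun n ↦ ?_)
    rw [pow_succ]
    exact hVopen.mul_left
  refine ⟨S', hopen, ?_⟩
  have mulVpow (n : ℕ) : W * V ^ (n + 1) ⊆ W := by
    induction' n with n ih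
    · simp [hVmul]
    · rw [pow_succ, ← mul_assoc]
      exact (Set.mul_subset_mul_right ih).trans hVmul
  have hsub (n : ℕ) : V ^ (n + 1) ⊆ W * V ^ (n + 1) := by
    intro x xin
    rw [Set.mem_mul]
    exact ⟨1, einW, x, xin, one_mul x⟩
  exact iUnion_subset fun i _ a ↦ mulVpow i (hsub i a)

end vanDantzig

/-- Every locally compact group contains an open almost connected
subgroup, i.e. an open subgroup U with U/U₀ compact, U₀ the identity component. -/
theorem stmt_2 {G : Type*} [Group G] [TopologicalSpace G] [IsTopologicalGroup G]
    [LocallyCompactSpace G] :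
    ∃ U : Subgroup G, IsOpen (U : Set G) ∧
      CompactSpace ((↥U) ⧸ (Subgroup.connectedComponentOfOne ↥U)) := by
  classical
  set N : Subgroup G := Subgroup.connectedComponentOfOne G with hNdef
  have hNset : (N : Set G) = connectedComponent (1 : G) := rfl
  haveI hNnormal : N.Normal := by
    constructor
    intro n hn g
    have hc : Continuous fun x : G => g * x * g⁻¹ :=
      (continuous_const.mul continuous_id).mul continuous_const
    have h2 := hc.image_connectedComponent_subset (1 : G)
    have : g * n * g⁻¹ ∈ connectedComponent ((fun x : G => g * x * g⁻¹) 1) :=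
      h2 ⟨n, hn, rfl⟩
    show g * n * g⁻¹ ∈ (N : Set G); rw [hNset]; simpa using this
  haveI hNclosed : IsClosed (N : Set G) := isClosed_connectedComponent
  -- fibers of the quotient map are connected
  have fibers : ∀ q : G ⧸ N, IsConnected ((QuotientGroup.mk : G → G ⧸ N) ⁻¹' {q}) := by
    intro q
    obtain ⟨a, rfl⟩ := QuotientGroup.mk_surjective q
    have heq : (QuotientGroup.mk : G → G ⧸ N) ⁻¹' {((a : G) : G ⧸ N)}
        = (fun x : G => a * x) '' (N : Set G) := by
      ext x
      simp only [mem_preimage, mem_singleton_iff, Set.mem_image]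
      constructor
      · intro h
        exact ⟨a⁻¹ * x, QuotientGroup.eq.mp h.symm, by group⟩
      · rintro ⟨n, hn, rfl⟩
        exact (QuotientGroup.eq.mpr (by simpa using hn)).symm
    rw [heq, hNset]
    exact isConnected_connectedComponent.image _ (continuous_mul_left a).continuousOn
  haveI : TotallyDisconnectedSpace (G ⧸ N) := by
    rw [totallyDisconnectedSpace_iff_connectedComponent_singleton]
    intro q
    obtain ⟨a, rfl⟩ := QuotientGroup.mk_surjective q
    have hpre := (QuotientGroup.isQuotientMap_mk N).preimage_connectedComponent fibers a
    have hca : connectedComponent a ⊆ (fun x : G => a * x) '' (N : Set G) := by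
      intro x hx
      refine ⟨a⁻¹ * x, ?_, by group⟩
      have h2 := (continuous_mul_left a⁻¹).image_connectedComponent_subset a
      have : a⁻¹ * x ∈ connectedComponent (a⁻¹ * a) := h2 ⟨x, hx, rfl⟩
      rw [hNset]
      simpa using this
    apply Subset.antisymm
    · intro q hq
      have : q ∈ (QuotientGroup.mk : G → G ⧸ N) ''
          ((QuotientGroup.mk : G → G ⧸ N) ⁻¹' connectedComponent ((a : G) : G ⧸ N)) := by
        rwa [image_preimage_eq _ (QuotientGroup.mk_surjective)]
      obtain ⟨x, hx, rfl⟩ := this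
      rw [hpre] at hx
      obtain ⟨n, hn, rfl⟩ := hca hx
      simp only [mem_singleton_iff]
      exact (QuotientGroup.eq.mpr (by simpa using hn)).symm
    · simpa using mem_connectedComponent
  haveI : T2Space (G ⧸ N) := inferInstance
  -- a compact open subgroup of the quotient
  obtain ⟨K, Kcomp, Knhds⟩ := exists_compact_mem_nhds (1 : G ⧸ N)
  obtain ⟨V, hVclopen, hV1, hVsub⟩ :=
    (loc_compact_Haus_tot_disc_of_zero_dim (H := G ⧸ N)).mem_nhds_iff.mp Knhds
  have Vcomp : IsCompact V := Kcomp.of_isClosed_subset hVclopen.1 hVsub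
  obtain ⟨H', H'open, H'sub⟩ := aux_exist_openSubgroup Vcomp hVclopen.2 hV1
  have H'comp : IsCompact (H' : Set (G ⧸ N)) :=
    Vcomp.of_isClosed_subset (H'.isClosed_of_isOpen H'open) H'sub
  set U : Subgroup G := H'.comap (QuotientGroup.mk' N) with hUdef
  have hUset : (U : Set G) = (QuotientGroup.mk : G → G ⧸ N) ⁻¹' (H' : Set (G ⧸ N)) := rfl
  have hUopen : IsOpen (U : Set G) := by
    rw [hUset]
    exact H'open.preimage (QuotientGroup.isQuotientMap_mk N).continuous
  have hUclosed : IsClosed (U : Set G) := U.isClosed_of_isOpen hUopen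
  have hNU : (N : Set G) ⊆ (U : Set G) := by
    intro n hn
    rw [hUset]
    have : ((n : G) : G ⧸ N) = (1 : G ⧸ N) := (QuotientGroup.eq_one_iff n).mpr hn
    simp only [mem_preimage, this]
    exact H'.one_mem
  -- identity component of U
  have hU0 : (connectedComponent (1 : ↥U) : Set ↥U)
      = (Subtype.val : ↥U → G) ⁻¹' (N : Set G) := by
    apply Subset.antisymm
    · intro x hx
      have h2 := (continuous_subtype_val : Continuous (Subtype.val : ↥U → G)
        ).image_connectedComponent_subset (1 : ↥U)
      have : (x : G) ∈ connectedComponent ((1 : ↥U) : G) := h2 ⟨x, hx, rfl⟩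
      simpa [hNset] using this
    · intro x hx
      have himg : (Subtype.val : ↥U → G) '' ((Subtype.val : ↥U → G) ⁻¹' (N : Set G))
          = (N : Set G) := by
        ext g
        constructor
        · rintro ⟨x, hx, rfl⟩; exact hx
        · intro hg; exact ⟨⟨g, hNU hg⟩, hg, rfl⟩
      have h1 : IsPreconnected ((Subtype.val : ↥U → G) '' ((Subtype.val : ↥U → G) ⁻¹' (N : Set G))) := by
        rw [himg, hNset]; exact isPreconnected_connectedComponent
      have hconn : IsPreconnected ((Subtype.val : ↥U → G) ⁻¹' (N : Set G)) :=
        Topology.IsInducing.subtypeVal.isPreconnected_image.mp h1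
      exact hconn.subset_connectedComponent (mem_preimage.mpr N.one_mem) hx
  have hU0' : ∀ x : ↥U, x ∈ Subgroup.connectedComponentOfOne ↥U ↔ (x : G) ∈ N := by
    intro x
    constructor
    · intro h
      have : x ∈ (connectedComponent (1 : ↥U) : Set ↥U) := h
      rw [hU0] at this; exact this
    · intro h
      show x ∈ (connectedComponent (1 : ↥U) : Set ↥U)
      rw [hU0]; exact h
  refine ⟨U, hUopen, ?_⟩
  -- choose lifts and compact neighborhoods
  choose lift hlift using fun q : G ⧸ N => QuotientGroup.mk_surjective q
  choose Kc Kccomp Kcnhds using fun a : G => exists_compact_mem_nhds a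
  have hcov : (H' : Set (G ⧸ N)) ⊆
      ⋃ q ∈ (H' : Set (G ⧸ N)), (QuotientGroup.mk : G → G ⧸ N) '' interior (Kc (lift q)) := by
    intro q hq
    exact Set.mem_biUnion hq ⟨lift q, mem_interior_iff_mem_nhds.mpr (Kcnhds (lift q)), hlift q⟩
  have hopenmap : IsOpenMap (QuotientGroup.mk : G → G ⧸ N) := QuotientGroup.isOpenMap_coe
  obtain ⟨t, htsub, htfin, htcov⟩ := H'comp.elim_finite_subcover_image
    (fun q _ => hopenmap _ isOpen_interior) hcov
  set C : Set G := (⋃ q ∈ t, Kc (lift q)) ∩ (U : Set G) with hCdef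
  have Ccomp : IsCompact C :=
    (htfin.isCompact_biUnion (fun q _ => Kccomp (lift q))).inter_right hUclosed
  have CsubU : C ⊆ (U : Set G) := inter_subset_right
  -- the preimage of C in ↥U is compact and surjects onto the quotient
  have hCpre : IsCompact ((Subtype.val : ↥U → G) ⁻¹' C) := by
    refine Topology.IsInducing.subtypeVal.isCompact_preimage' Ccomp ?_
    rwa [Subtype.range_val]
  rw [← isCompact_univ_iff]
  have huniv : (univ : Set (↥U ⧸ Subgroup.connectedComponentOfOne ↥U))
      = (QuotientGroup.mk : ↥U → ↥U ⧸ Subgroup.connectedComponentOfOne ↥U) ''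
        ((Subtype.val : ↥U → G) ⁻¹' C) := by
    apply Subset.antisymm ?_ (subset_univ _)
    rintro z -
    obtain ⟨u, rfl⟩ := QuotientGroup.mk_surjective z
    have humem : ((u : G) : G ⧸ N) ∈ (H' : Set (G ⧸ N)) := u.2
    have := htcov humem
    obtain ⟨q, hqt, g, hgint, hgmk⟩ := by
      simpa only [Set.mem_iUnion, exists_prop] using this
    have hgU : g ∈ U := Subgroup.mem_comap.mpr (by
      show ((g : G) : G ⧸ N) ∈ H'
      rw [hgmk]; exact humem)
    have hgC : g ∈ C := ⟨Set.mem_biUnion hqt (interior_subset hgint), hgU⟩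
    refine ⟨⟨g, hgU⟩, hgC, ?_⟩
    apply (QuotientGroup.eq (s := Subgroup.connectedComponentOfOne ↥U)).mpr
    rw [hU0']
    show (g : G)⁻¹ * (u : G) ∈ N
    exact QuotientGroup.eq.mp hgmk
  rw [huniv]
  exact hCpre.image continuous_quot_mk
end

section
/- Let G be a locally compact group, let I be a downward directed family of compact subgroups with ⋂ I = {1}, and suppose each k ∈ I is contained in an open subgroup U_k such that U_k/k has no small subgroups. If k ∈ I has the no-small-subgroups property relative to its ambient quotient (i.e., there is a neighborhood of the identity in N_G(k)/k containing no nontrivial subgroup), then for every such k the set of k' ∈ I with k' ⊆ k is cofinal in I; in particular I is a neighborhood basis filter refinement: every neighborhood of 1 in G contains some k' ∈ I. -/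
open Filter

/-- A topological group has no small subgroups if some neighborhood of the
identity contains no nontrivial subgroup. -/
def HasNoSmallSubgroups (L : Type*) [Group L] [TopologicalSpace L] : Prop :=
  ∃ V ∈ nhds (1 : L), ∀ H : Subgroup L, (H : Set L) ⊆ V → H = ⊥

/-- Given a downward directed family I of compact subgroups of a
locally compact group G with ⋂ I = {1}, each contained in an open subgroup U_k
with U_k/k having no small subgroups (we use the normalizer quotient N_G(k)/k),
the subfamily {k' ∈ I | k' ⊆ k} is cofinal in I for every k ∈ I, and every
neighborhood of 1 contains some member of I. -/
theorem stmt_4 {G : Type*} [Group G] [TopologicalSpace G] [IsTopologicalGroup G]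
    [LocallyCompactSpace G]
    (I : Set (Subgroup G))
    (hne : I.Nonempty)
    (hcompact : ∀ k ∈ I, IsCompact (k : Set G))
    (hdir : ∀ k₁ ∈ I, ∀ k₂ ∈ I, ∃ k₃ ∈ I, k₃ ≤ k₁ ∧ k₃ ≤ k₂)
    (hinter : ⋂ k ∈ I, (k : Set G) = {1})
    (hopen : ∀ k ∈ I, IsOpen (Subgroup.normalizer (k : Set G) : Set G))
    (hnss : ∀ k ∈ I,
      HasNoSmallSubgroups (↥(Subgroup.normalizer (k : Set G)) ⧸ k.subgroupOf (Subgroup.normalizer (k : Set G)))) :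
    (∀ k ∈ I, ∀ j ∈ I, ∃ k' ∈ I, k' ≤ j ∧ k' ≤ k) ∧
    (∀ W ∈ nhds (1 : G), ∃ k' ∈ I, (k' : Set G) ⊆ W) := by
  open Set in
  -- N is the closure of the trivial subgroup
  set N : Subgroup G := (⊥ : Subgroup G).topologicalClosure with hN
  have hNcoe : (N : Set G) = closure ({1} : Set G) := by
    simp [hN, Subgroup.topologicalClosure]
  -- every element of N lies in every open set containing 1
  have hA : ∀ x ∈ N, ∀ U : Set G, IsOpen U → (1 : G) ∈ U → x ∈ U := by
    intro x hx U hU h1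
    have hxinv : x⁻¹ ∈ N := N.inv_mem hx
    have hxinv' : x⁻¹ ∈ closure ({1} : Set G) := by rwa [← hNcoe]
    have hAopen : IsOpen ((fun g => x * g) ⁻¹' U) := hU.preimage (continuous_mul_left x)
    have hmem : x⁻¹ ∈ (fun g => x * g) ⁻¹' U := by simp [h1]
    rcases mem_closure_iff.1 hxinv' _ hAopen hmem with ⟨y, hy1, hy2⟩
    rcases hy2 with rfl
    simpa using hy1
  -- N is contained in every k ∈ I
  have hNk : ∀ k ∈ I, N ≤ k := by
    intro k hk x hx
    obtain ⟨V, hV, hVs⟩ := hnss k hk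
    have hxNk : x ∈ (Subgroup.normalizer (k : Set G)) := hA x hx _ (hopen k hk) (Subgroup.normalizer (k : Set G)).one_mem
    set π := QuotientGroup.mk' (k.subgroupOf (Subgroup.normalizer (k : Set G))) with hπ
    set P : Subgroup (↥(Subgroup.normalizer (k : Set G)) ⧸ k.subgroupOf (Subgroup.normalizer (k : Set G))) :=
      (N.subgroupOf (Subgroup.normalizer (k : Set G))).map π with hP
    have hpre : (π : ↥(Subgroup.normalizer (k : Set G)) → _) ⁻¹' V ∈ nhds (1 : ↥(Subgroup.normalizer (k : Set G))) := by
      have : Continuous (π : ↥(Subgroup.normalizer (k : Set G)) → _) := QuotientGroup.continuous_mk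
      exact this.continuousAt.preimage_mem_nhds (by simpa using hV)
    rcases mem_nhds_iff.1 hpre with ⟨O, hOsub, hOopen, hO1⟩
    rcases isOpen_induced_iff.1 hOopen with ⟨O', hO'open, rfl⟩
    have hO'1 : (1 : G) ∈ O' := hO1
    have hPV : (P : Set _) ⊆ V := by
      rintro _ ⟨y, hy, rfl⟩
      apply hOsub
      show (y : G) ∈ O'
      exact hA _ hy _ hO'open hO'1
    have hPbot : P = ⊥ := hVs P hPV
    have : π ⟨x, hxNk⟩ = 1 := by
      have : π ⟨x, hxNk⟩ ∈ P := ⟨⟨x, hxNk⟩, hx, rfl⟩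
      rw [hPbot] at this
      simpa using this
    have := (QuotientGroup.eq_one_iff _).1 this
    exact this
  -- hence N = ⊥ and {1} is closed, so G is T2
  have hclosed : IsClosed ({1} : Set G) := by
    have hsub : closure ({1} : Set G) ⊆ {1} := by
      rw [← hNcoe]
      intro x hx
      have : x ∈ ⋂ k ∈ I, (k : Set G) := by
        simp only [mem_iInter]
        exact fun k hk => hNk k hk hx
      rwa [hinter] at this
    exact closure_eq_iff_isClosed.1 (le_antisymm hsub subset_closure)
  haveI : T2Space G := IsTopologicalGroup.t2Space_iff_one_closed.2 hclosed
  refine ⟨fun k hk j hj => ?_, fun W hW => ?_⟩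
  · obtain ⟨k₃, h₃, h₁, h₂⟩ := hdir j hj k hk
    exact ⟨k₃, h₃, h₁, h₂⟩
  · rcases mem_nhds_iff.1 hW with ⟨U, hUW, hUopen, hU1⟩
    obtain ⟨k₀, hk₀⟩ := hne
    haveI : Nonempty I := ⟨⟨k₀, hk₀⟩⟩
    have hclosedk : ∀ k : I, IsClosed ((k : Subgroup G) : Set G) := fun k =>
      (hcompact k k.2).isClosed
    have := (hcompact k₀ hk₀).elim_directed_family_closed
      (fun k : I => ((k : Subgroup G) : Set G) \ U)
      (fun k => (hclosedk k).sdiff hUopen)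
      ?_ ?_
    · obtain ⟨⟨k, hkI⟩, hkempty⟩ := this
      obtain ⟨k', hk', h1, h2⟩ := hdir k₀ hk₀ k hkI
      refine ⟨k', hk', fun x hx => hUW ?_⟩
      by_contra hxU
      have : x ∈ (k₀ : Set G) ∩ (((k : Subgroup G) : Set G) \ U) :=
        ⟨h1 hx, h2 hx, hxU⟩
      rw [hkempty] at this
      exact this
    · ext x
      simp only [mem_inter_iff, mem_iInter, mem_diff, mem_empty_iff_false, iff_false]
      rintro ⟨hx₀, hx⟩
      have hx1 : x ∈ ⋂ k ∈ I, (k : Set G) := by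
        simp only [mem_iInter]
        exact fun k hk => (hx ⟨k, hk⟩).1
      rw [hinter] at hx1
      exact (hx ⟨k₀, hk₀⟩).2 (hx1 ▸ hU1)
    · rintro ⟨k₁, h₁⟩ ⟨k₂, h₂⟩
      obtain ⟨k₃, h₃, hle₁, hle₂⟩ := hdir k₁ h₁ k₂ h₂
      exact ⟨⟨k₃, h₃⟩, fun x hx => ⟨hle₁ hx.1, hx.2⟩, fun x hx => ⟨hle₂ hx.1, hx.2⟩⟩
end
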